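/- With the hypotheses of the policy improvement monotonicity setting, defining g_i = r^n_i + γ(P^n v^m)_i − (r^m_i + γ(P^m v^m)_i), the difference of values satisfies v^n − v^m = (I − γP^n)⁻¹ g; consequently if g ≥ 0 componentwise then v^n ≥ v^m componentwise. -/

import Mathlib

open Matrix
open scoped NNReal

attribute [local instance] Matrix.linftyOpNormedRing Matrix.linftyOpNormedAlgebra

lemma stmt4_key (N : ℕ) (P : Matrix (Fin N) (Fin N) ℝ)
    (hnn : ∀ i j, 0 ≤ P i j) (hrow : ∀ i, ∑ j, P i j = 1)
    (γ : ℝ) (hγ0 : 0 ≤ γ) (hγ1 : γ < 1) :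
    (1 - γ • P) * (1 - γ • P)⁻¹ = 1 ∧ (1 - γ • P)⁻¹ * (1 - γ • P) = 1 ∧
      ∀ i j, 0 ≤ (1 - γ • P)⁻¹ i j := by
  set t : Matrix (Fin N) (Fin N) ℝ := γ • P with ht'
  have htnn : ∀ i j, 0 ≤ t i j := fun i j => by
    simpa [ht', Matrix.smul_apply, smul_eq_mul] using mul_nonneg hγ0 (hnn i j)
  have hnorm : ‖t‖ ≤ γ := by
    rw [Matrix.linfty_opNorm_def]
    rw [← Real.coe_toNNReal γ hγ0, NNReal.coe_le_coe]
    refine Finset.sup_le fun i _ => ?_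
    rw [← NNReal.coe_le_coe, NNReal.coe_sum, Real.coe_toNNReal _ hγ0]
    have : ∀ j, ((‖t i j‖₊ :ℝ≥0) : ℝ) = t i j := fun j => by
      rw [coe_nnnorm, Real.norm_of_nonneg (htnn i j)]
    refine le_of_eq ?_
    calc ∑ j, ((‖t i j‖₊ :ℝ≥0) : ℝ) = ∑ j, t i j := Finset.sum_congr rfl fun j _ => this j
      _ = γ * ∑ j, P i j := by simp [ht', Matrix.smul_apply, smul_eq_mul, Finset.mul_sum]
      _ = γ := by rw [hrow i, mul_one]
  have ht : ‖t‖ < 1 := lt_of_le_of_lt hnorm hγ1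
  haveI : CompleteSpace (Matrix (Fin N) (Fin N) ℝ) := FiniteDimensional.complete ℝ _
  have hunit : IsUnit (1 - t) := isUnit_one_sub_of_norm_lt_one ht
  have hdet : IsUnit (1 - t).det := (Matrix.isUnit_iff_isUnit_det _).mp hunit
  refine ⟨Matrix.mul_nonsing_inv _ hdet, Matrix.nonsing_inv_mul _ hdet, ?_⟩
  have hinv : (1 - t)⁻¹ = ∑' n : ℕ, t ^ n := by
    rw [Matrix.nonsing_inv_eq_ringInverse, ← geom_series_eq_inverse t ht]
    rfl
  have hs : Summable (fun n : ℕ => t ^ n) := summable_geometric_of_norm_lt_one ht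
  have hpow : ∀ (n : ℕ) i j, 0 ≤ (t ^ n) i j := by
    intro n
    induction n with
    | zero =>
      intro i j
      simp only [pow_zero, Matrix.one_apply]
      split <;> norm_num
    | succ n ih =>
      intro i j
      rw [pow_succ, Matrix.mul_apply]
      exact Finset.sum_nonneg fun k _ => mul_nonneg (ih i k) (htnn k j)
  intro i j
  rw [hinv]
  let e : Matrix (Fin N) (Fin N) ℝ →ₗ[ℝ] ℝ :=
    { toFun := fun A => A i j
      map_add' := fun A B => rfl
      map_smul' := fun c A => rfl }
  have hmap : (∑' n : ℕ, t ^ n) i j = ∑' n : ℕ, (t ^ n) i j := by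
    exact (e.toContinuousLinearMap.map_tsum hs)
  rw [hmap]
  exact tsum_nonneg fun n => hpow n i j

/-- With `g_i = r^n_i + γ(P^n v^m)_i − (r^m_i + γ(P^m v^m)_i)`, the difference
of values satisfies `v^n − v^m = (I − γP^n)⁻¹ g`; consequently if `g ≥ 0`
componentwise then `v^n ≥ v^m` componentwise. -/
theorem stmt4 (N : ℕ) (Pm Pn : Matrix (Fin N) (Fin N) ℝ)
    (hmnonneg : ∀ i j, 0 ≤ Pm i j) (hmrow : ∀ i, ∑ j, Pm i j = 1)
    (hnnonneg : ∀ i j, 0 ≤ Pn i j) (hnrow : ∀ i, ∑ j, Pn i j = 1)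
    (γ : ℝ) (hγ0 : 0 ≤ γ) (hγ1 : γ < 1)
    (rm rn vm vn g : Fin N → ℝ)
    (hvm : vm = (1 - γ • Pm)⁻¹.mulVec rm)
    (hvn : vn = (1 - γ • Pn)⁻¹.mulVec rn)
    (hg : ∀ i, g i = rn i + γ * Pn.mulVec vm i - (rm i + γ * Pm.mulVec vm i)) :
    vn - vm = (1 - γ • Pn)⁻¹.mulVec g ∧ ((∀ i, 0 ≤ g i) → ∀ i, vm i ≤ vn i) := by
  obtain ⟨hAA, _, _⟩ := stmt4_key N Pm hmnonneg hmrow γ hγ0 hγ1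
  obtain ⟨hBB, hB'B, hBnn⟩ := stmt4_key N Pn hnnonneg hnrow γ hγ0 hγ1
  have hrm : (1 - γ • Pm) *ᵥ vm = rm := by
    rw [hvm, Matrix.mulVec_mulVec, hAA, Matrix.one_mulVec]
  have hrn : (1 - γ • Pn) *ᵥ vn = rn := by
    rw [hvn, Matrix.mulVec_mulVec, hBB, Matrix.one_mulVec]
  have h2 : (1 - γ • Pn) *ᵥ (vn - vm) = g := by
    funext i
    have e1 := congrFun hrm i
    have e2 := congrFun hrn i
    have e3 := hg i
    simp only [Matrix.sub_mulVec, Matrix.one_mulVec, Matrix.smul_mulVec,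
      Matrix.mulVec_sub, Pi.sub_apply, Pi.smul_apply, smul_eq_mul] at e1 e2 ⊢
    rw [e3]
    ring_nf
    linarith
  have hmain : vn - vm = (1 - γ • Pn)⁻¹.mulVec g := by
    rw [← h2, Matrix.mulVec_mulVec, hB'B, Matrix.one_mulVec]
  refine ⟨hmain, fun hgpos i => ?_⟩
  have : 0 ≤ (vn - vm) i := by
    rw [hmain]
    simp only [Matrix.mulVec, dotProduct]
    exact Finset.sum_nonneg fun j _ => mul_nonneg (hBnn i j) (hgpos j)
  simpa [sub_nonneg] using this
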